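/- (Corollary 5.5, simplified a priori error bound, ℓ∞ version.) Suppose the weighting matrix is the identity, W̄ = I_{N·N_t}. Let x be a space-time function with r̄(x) = 0, and let x̃ ∈ S satisfy ‖r̄(x̃)‖₂ ≤ ‖r̄(w)‖₂ for all w ∈ S. Assume there exists s_A > 0 with ‖A_LM z‖₂ ≥ s_A ‖z‖₂ for all z ∈ ℝ^{N·N_t}, that σ_max(A_LM) ≥ s_A, and that Δt · L_f · σ_max(B_LM) < s_A. Define the Lebesgue constant Λ := (σ_max(A_LM) − s_A + 2·Δt·L_f·σ_max(B_LM)) / (s_A − Δt·L_f·σ_max(B_LM)). Then for every w ∈ S, max_{n ∈ Fin N_t} ‖x(n) − x̃(n)‖₂ ≤ √N_t · (1 + Λ) · max_{n ∈ Fin N_t} ‖x(n) − w(n)‖₂. -/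

import Mathlib

noncomputable section

/-- A space-time function. -/
abbrev SpaceTime (N Nt : ℕ) := Fin Nt → EuclideanSpace ℝ (Fin N)

/-- Vectorization of a space-time function: stacks the blocks `w 0, …, w (Nt-1)`
into a single Euclidean vector of dimension `N * Nt`. -/
def vec {N Nt : ℕ} (w : SpaceTime N Nt) : EuclideanSpace ℝ (Fin Nt × Fin N) :=
  (WithLp.equiv 2 _).symm (fun p => w p.1 p.2)

/-- The largest singular value (ℓ² operator norm) of a real matrix. -/
def sigmaMax {m n : Type*} [Fintype m] [Fintype n] [DecidableEq n] (M : Matrix m n ℝ) : ℝ :=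
  ‖LinearMap.toContinuousLinearMap (Matrix.toEuclideanLin M)‖

/-- Matrix–vector multiplication as a map between Euclidean spaces. -/
def mulVecE {m n : Type*} [Fintype m] [Fintype n] [DecidableEq n] (M : Matrix m n ℝ)
    (v : EuclideanSpace ℝ n) : EuclideanSpace ℝ m :=
  Matrix.toEuclideanLin M v

/-- The stacked velocity `F̄(w)`: vectorization of `n ↦ f (w n, t n)`. -/
def Fbar {N Nt : ℕ} (f : EuclideanSpace ℝ (Fin N) × ℝ → EuclideanSpace ℝ (Fin N))
    (t : Fin Nt → ℝ) (w : SpaceTime N Nt) : EuclideanSpace ℝ (Fin Nt × Fin N) :=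
  vec (fun n => f (w n, t n))

/-- The space-time linear multistep residual `r̄(w) = A_LM vec(w) − Δt B_LM F̄(w) + b`. -/
def resid {N Nt : ℕ} (A_LM B_LM : Matrix (Fin Nt × Fin N) (Fin Nt × Fin N) ℝ)
    (b : EuclideanSpace ℝ (Fin Nt × Fin N)) (Δt : ℝ)
    (f : EuclideanSpace ℝ (Fin N) × ℝ → EuclideanSpace ℝ (Fin N))
    (t : Fin Nt → ℝ) (w : SpaceTime N Nt) : EuclideanSpace ℝ (Fin Nt × Fin N) :=
  mulVecE A_LM (vec w) - Δt • mulVecE B_LM (Fbar f t w) + b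

lemma vec_sub {N Nt : ℕ} (u v : SpaceTime N Nt) :
    vec u - vec v = vec (fun n => u n - v n) := rfl

lemma norm_vec_sq {N Nt : ℕ} (z : SpaceTime N Nt) :
    ‖vec z‖ ^ 2 = ∑ n : Fin Nt, ‖z n‖ ^ 2 := by
  rw [EuclideanSpace.norm_eq, Real.sq_sqrt (by positivity), Fintype.sum_prod_type]
  refine Finset.sum_congr rfl fun n _ => ?_
  rw [EuclideanSpace.norm_eq, Real.sq_sqrt (by positivity)]
  rfl

lemma le_of_sq_le_sq'' {a b : ℝ} (ha : 0 ≤ a) (hb : 0 ≤ b) (h : a^2 ≤ b^2) : a ≤ b := by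
  nlinarith

lemma block_le {N Nt : ℕ} (z : SpaceTime N Nt) (n : Fin Nt) : ‖z n‖ ≤ ‖vec z‖ := by
  refine le_of_sq_le_sq'' (norm_nonneg _) (norm_nonneg _) ?_
  rw [norm_vec_sq]
  exact Finset.single_le_sum (f := fun m => ‖z m‖^2) (fun i _ => by positivity) (Finset.mem_univ n)

lemma mulVecE_le {m n : Type*} [Fintype m] [Fintype n] [DecidableEq n] (M : Matrix m n ℝ)
    (v : EuclideanSpace ℝ n) : ‖mulVecE M v‖ ≤ sigmaMax M * ‖v‖ :=
  (LinearMap.toContinuousLinearMap (Matrix.toEuclideanLin M)).le_opNorm v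

set_option maxHeartbeats 1000000 in
/-- Corollary 5.5, ℓ∞ version: simplified a priori error bound
for the unweighted (identity weighting matrix) case. -/
theorem simplified_apriori_linf_bound {N Nt : ℕ} (hN : 1 ≤ N) (hNt : 1 ≤ Nt)
    (t : Fin Nt → ℝ) (Δt : ℝ) (hΔt : 0 < Δt)
    (A_LM B_LM : Matrix (Fin Nt × Fin N) (Fin Nt × Fin N) ℝ)
    (b : EuclideanSpace ℝ (Fin Nt × Fin N))
    (f : EuclideanSpace ℝ (Fin N) × ℝ → EuclideanSpace ℝ (Fin N))
    (L_f : ℝ) (hLf : 0 ≤ L_f)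
    (hlip : ∀ (u v : EuclideanSpace ℝ (Fin N)) (n : Fin Nt),
      ‖f (u, t n) - f (v, t n)‖ ≤ L_f * ‖u - v‖)
    (S : Set (SpaceTime N Nt))
    (x : SpaceTime N Nt) (hx : resid A_LM B_LM b Δt f t x = 0)
    (xt : SpaceTime N Nt) (hxtS : xt ∈ S)
    (hopt : ∀ w ∈ S, ‖resid A_LM B_LM b Δt f t xt‖ ≤ ‖resid A_LM B_LM b Δt f t w‖)
    (sA : ℝ) (hsA : 0 < sA)
    (hAlow : ∀ z : EuclideanSpace ℝ (Fin Nt × Fin N), sA * ‖z‖ ≤ ‖mulVecE A_LM z‖)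
    (hAup : sA ≤ sigmaMax A_LM)
    (hdt : Δt * L_f * sigmaMax B_LM < sA) :
    ∀ w ∈ S, (⨆ n : Fin Nt, ‖x n - xt n‖) ≤
      Real.sqrt Nt * (1 + (sigmaMax A_LM - sA + 2 * Δt * L_f * sigmaMax B_LM) /
        (sA - Δt * L_f * sigmaMax B_LM)) * ⨆ n : Fin Nt, ‖x n - w n‖ := by
  intro w hw
  haveI : Nonempty (Fin Nt) := ⟨⟨0, hNt⟩⟩
  set σA := sigmaMax A_LM with hσA
  set σB := sigmaMax B_LM with hσB
  have hσBnn : 0 ≤ σB := norm_nonneg _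
  set ε := Δt * L_f * σB with hεdef
  have hεnn : 0 ≤ ε := by positivity
  have hden : 0 < sA - ε := sub_pos.mpr hdt
  -- Lipschitz bound for Fbar
  have hFbar : ∀ u v : SpaceTime N Nt,
      ‖Fbar f t u - Fbar f t v‖ ≤ L_f * ‖vec u - vec v‖ := by
    intro u v
    refine le_of_sq_le_sq'' (norm_nonneg _) (by positivity) ?_
    have h1 : Fbar f t u - Fbar f t v = vec (fun n => f (u n, t n) - f (v n, t n)) := rfl
    rw [h1, vec_sub u v, norm_vec_sq, mul_pow, norm_vec_sq, Finset.mul_sum]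
    refine Finset.sum_le_sum fun n _ => ?_
    have := hlip (u n) (v n) n
    nlinarith [norm_nonneg (u n - v n), norm_nonneg (f (u n, t n) - f (v n, t n))]
  -- residual difference formula
  have hres : ∀ u v : SpaceTime N Nt,
      resid A_LM B_LM b Δt f t u - resid A_LM B_LM b Δt f t v =
        mulVecE A_LM (vec u - vec v) -
          Δt • mulVecE B_LM (Fbar f t u - Fbar f t v) := by
    intro u v
    simp only [resid, mulVecE, map_sub, smul_sub]
    abel
  have hBterm : ∀ u v : SpaceTime N Nt,
      ‖Δt • mulVecE B_LM (Fbar f t u - Fbar f t v)‖ ≤ ε * ‖vec u - vec v‖ := by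
    intro u v
    rw [norm_smul, Real.norm_eq_abs, abs_of_pos hΔt]
    calc Δt * ‖mulVecE B_LM (Fbar f t u - Fbar f t v)‖
        ≤ Δt * (σB * ‖Fbar f t u - Fbar f t v‖) := by
          exact mul_le_mul_of_nonneg_left (mulVecE_le _ _) hΔt.le
      _ ≤ Δt * (σB * (L_f * ‖vec u - vec v‖)) := by
          refine mul_le_mul_of_nonneg_left (mul_le_mul_of_nonneg_left (hFbar u v) hσBnn) hΔt.le
      _ = ε * ‖vec u - vec v‖ := by rw [hεdef]; ring
  -- lower bound
  have hlow : (sA - ε) * ‖vec x - vec xt‖ ≤ ‖resid A_LM B_LM b Δt f t xt‖ := by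
    have h0 : ‖resid A_LM B_LM b Δt f t x - resid A_LM B_LM b Δt f t xt‖ =
        ‖resid A_LM B_LM b Δt f t xt‖ := by rw [hx, zero_sub, norm_neg]
    rw [← h0, hres]
    have := norm_sub_norm_le (mulVecE A_LM (vec x - vec xt))
      (Δt • mulVecE B_LM (Fbar f t x - Fbar f t xt))
    have hA := hAlow (vec x - vec xt)
    have hB := hBterm x xt
    nlinarith [norm_nonneg (vec x - vec xt)]
  -- upper bound on ‖resid w‖
  have hup : ‖resid A_LM B_LM b Δt f t w‖ ≤ (σA + ε) * ‖vec x - vec w‖ := by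
    have h0 : ‖resid A_LM B_LM b Δt f t w‖ =
        ‖resid A_LM B_LM b Δt f t x - resid A_LM B_LM b Δt f t w‖ := by
      rw [hx, zero_sub, norm_neg]
    rw [h0, hres]
    have h1 := norm_sub_le (mulVecE A_LM (vec x - vec w))
      (Δt • mulVecE B_LM (Fbar f t x - Fbar f t w))
    have hA := mulVecE_le A_LM (vec x - vec w)
    have hB := hBterm x w
    calc _ ≤ ‖mulVecE A_LM (vec x - vec w)‖ +
        ‖Δt • mulVecE B_LM (Fbar f t x - Fbar f t w)‖ := h1
      _ ≤ σA * ‖vec x - vec w‖ + ε * ‖vec x - vec w‖ := add_le_add hA hB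
      _ = (σA + ε) * ‖vec x - vec w‖ := by ring
  have hkey : ‖vec x - vec xt‖ ≤ ((σA + ε) / (sA - ε)) * ‖vec x - vec w‖ := by
    rw [div_mul_eq_mul_div, le_div_iff₀ hden]
    calc ‖vec x - vec xt‖ * (sA - ε) = (sA - ε) * ‖vec x - vec xt‖ := by ring
      _ ≤ ‖resid A_LM B_LM b Δt f t xt‖ := hlow
      _ ≤ ‖resid A_LM B_LM b Δt f t w‖ := hopt w hw
      _ ≤ (σA + ε) * ‖vec x - vec w‖ := hup
  -- sup bounds
  set Sw := ⨆ n : Fin Nt, ‖x n - w n‖ with hSw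
  have hSwmem : ∀ n : Fin Nt, ‖x n - w n‖ ≤ Sw :=
    fun n => le_ciSup (f := fun m => ‖x m - w m‖) (Set.Finite.bddAbove (Set.finite_range _)) n
  have hSwnn : 0 ≤ Sw := le_trans (norm_nonneg _) (hSwmem ⟨0, hNt⟩)
  have hvecw : ‖vec x - vec w‖ ≤ Real.sqrt Nt * Sw := by
    refine le_of_sq_le_sq'' (norm_nonneg _) (by positivity) ?_
    rw [vec_sub, norm_vec_sq, mul_pow, Real.sq_sqrt (Nat.cast_nonneg Nt)]
    calc (∑ n : Fin Nt, ‖x n - w n‖ ^ 2) ≤ ∑ _n : Fin Nt, Sw ^ 2 := by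
          refine Finset.sum_le_sum fun n _ => ?_
          have := hSwmem n
          nlinarith [norm_nonneg (x n - w n)]
      _ = (Nt : ℝ) * Sw ^ 2 := by
          rw [Finset.sum_const, Finset.card_univ, Fintype.card_fin, nsmul_eq_mul]
  have hC : (0:ℝ) ≤ (σA + ε) / (sA - ε) := by
    apply div_nonneg _ hden.le
    have : (0:ℝ) ≤ σA := norm_nonneg _
    linarith
  have hfinal : ‖vec x - vec xt‖ ≤ ((σA + ε) / (sA - ε)) * (Real.sqrt Nt * Sw) :=
    le_trans hkey (mul_le_mul_of_nonneg_left hvecw hC)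
  have hsup : (⨆ n : Fin Nt, ‖x n - xt n‖) ≤ ‖vec x - vec xt‖ := by
    refine ciSup_le fun n => ?_
    rw [vec_sub]
    exact block_le (fun m => x m - xt m) n
  have hΛ : 1 + (σA - sA + 2 * Δt * L_f * σB) / (sA - Δt * L_f * σB)
      = (σA + ε) / (sA - ε) := by
    rw [hεdef]
    have hne : sA - Δt * L_f * σB ≠ 0 := hden.ne'
    field_simp
    ring
  calc (⨆ n : Fin Nt, ‖x n - xt n‖) ≤ ‖vec x - vec xt‖ := hsup
    _ ≤ ((σA + ε) / (sA - ε)) * (Real.sqrt Nt * Sw) := hfinal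
    _ = Real.sqrt Nt * (1 + (σA - sA + 2 * Δt * L_f * σB) / (sA - Δt * L_f * σB)) * Sw := by
        rw [hΛ]; ring
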